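/- Let (Y(u))_{u∈(0,∞)} be a centred real-valued stochastic process satisfying Conditions (B). Then E[Y(u)^2] < ∞ for every u ∈ (0,∞). -/

import Mathlib

open MeasureTheory ProbabilityTheory Filter Set

noncomputable section

/-- The law of a real stochastic process, as a measure on the product space. -/
def processLaw {Ω I : Type*} [MeasurableSpace Ω] (P : Measure Ω) (X : I → Ω → ℝ) :
    Measure (I → ℝ) :=
  Measure.map (fun ω i => X i ω) P

/-- The σ-algebra generated by a real stochastic process. -/
def processSigma {Ω I : Type*} (X : I → Ω → ℝ) : MeasurableSpace Ω :=
  ⨆ i, MeasurableSpace.comap (X i) inferInstance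

/-- Finite dimensional distributions of the process `X` are those of a centred Gaussian
process with covariance kernel `K` (expressed through one-dimensional laws of
arbitrary finite linear combinations). -/
def HasGaussianFDD {Ω : Type*} [MeasurableSpace Ω] (P : Measure Ω) {I : Type*}
    (X : I → Ω → ℝ) (K : I → I → ℝ) : Prop :=
  ∀ (n : ℕ) (idx : Fin n → I) (c : Fin n → ℝ),
    Measure.map (fun ω => ∑ i, c i * X (idx i) ω) P =
      gaussianReal 0 (Real.toNNReal (∑ i, ∑ j, c i * c j * K (idx i) (idx j)))

/-- Conditions (B) on a centred real stochastic process `(Y(u))_{u ∈ (0,∞)}`: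
stochastic continuity, finite moments of some positive order, Brownian scaling,
independence of future increments from the past, and the harness property. -/
structure ConditionsB {Ω : Type*} [MeasurableSpace Ω] (P : Measure Ω) (Y : ℝ → Ω → ℝ) :
    Prop where
  meas : ∀ u : ℝ, 0 < u → Measurable (Y u)
  /-- the process is centred -/
  centred : ∀ u : ℝ, 0 < u → Integrable (Y u) P ∧ ∫ ω, Y u ω ∂P = 0
  /-- (i) stochastic continuity -/
  stochasticContinuity : ∀ u₀ : ℝ, 0 < u₀ →
    TendstoInMeasure P Y (nhdsWithin u₀ (Ioi 0)) (Y u₀)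
  /-- (ii) finite moments of some positive order `ξ` -/
  momentBound : ∃ ξ : ℝ, 0 < ξ ∧ ∀ u : ℝ, 0 < u →
    ∫⁻ ω, ENNReal.ofReal (|Y u ω| ^ ξ) ∂P < ⊤
  /-- (iii) Brownian scaling -/
  scaling : ∀ c : ℝ, 0 < c →
    processLaw P (fun u : {u : ℝ // 0 < u} => Y (c * u.1)) =
      processLaw P (fun u : {u : ℝ // 0 < u} => fun ω => Real.sqrt c * Y u.1 ω)
  /-- (iv) future increments independent of the past -/
  indepIncrements : ∀ u : ℝ, 0 < u →
    Indep (processSigma fun s : {s : ℝ // u ≤ s} => fun ω => Y s.1 ω - Y u ω)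
          (processSigma fun s : {s : ℝ // 0 < s ∧ s ≤ u} => Y s.1) P
  /-- (v) the harness property -/
  harness : ∀ s r : ℝ, 0 < s → s < r →
    Indep (processSigma fun u : {u : ℝ // s < u ∧ u < r} => fun ω =>
            Y u.1 ω - ((u.1 - s) / (r - s) * Y r ω + (r - u.1) / (r - s) * Y s ω))
          ((processSigma fun v : {v : ℝ // 0 < v ∧ v ≤ s} => Y v.1) ⊔
            processSigma fun v : {v : ℝ // r ≤ v} => Y v.1) P

end


set_option linter.unusedSectionVars false
set_option maxHeartbeats 1000000
open Topology
open scoped ENNReal NNReal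

noncomputable section
namespace CBaux

variable {Ω : Type*} [MeasurableSpace Ω] (P : Measure Ω) [IsProbabilityMeasure P]

/-- characteristic function -/
def myCF (X : Ω → ℝ) (t : ℝ) : ℂ := ∫ ω, Complex.exp ((t * X ω : ℝ) * Complex.I) ∂P

lemma expI_meas (t : ℝ) : Measurable fun x : ℝ => Complex.exp ((t * x : ℝ) * Complex.I) := by
  fun_prop

lemma integrable_expI {X : Ω → ℝ} (hX : Measurable X) (t : ℝ) :
    Integrable (fun ω => Complex.exp ((t * X ω : ℝ) * Complex.I)) P := by
  refine (integrable_const (1 : ℝ)).mono' ?_ ?_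
  · exact ((expI_meas t).comp hX).aestronglyMeasurable
  · refine ae_of_all _ fun ω => ?_
    rw [Complex.norm_exp_ofReal_mul_I]

lemma norm_myCF_le_one {X : Ω → ℝ} (t : ℝ) : ‖myCF P X t‖ ≤ 1 := by
  calc ‖myCF P X t‖ ≤ ∫ ω, ‖Complex.exp ((t * X ω : ℝ) * Complex.I)‖ ∂P :=
        norm_integral_le_integral_norm _
  _ ≤ 1 := by
      simp only [Complex.norm_exp_ofReal_mul_I]
      simp

lemma myCF_neg (X : Ω → ℝ) (t : ℝ) :
    myCF P X (-t) = starRingEnd ℂ (myCF P X t) := by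
  rw [myCF, myCF, ← integral_conj]
  congr 1
  funext ω
  rw [← Complex.exp_conj]
  congr 1
  simp [Complex.ext_iff]

lemma myCF_indep_mul {X Z : Ω → ℝ} (h : IndepFun X Z P) (hX : Measurable X)
    (hZ : Measurable Z) (a b : ℝ) :
    ∫ ω, Complex.exp ((a * X ω : ℝ) * Complex.I) *
      Complex.exp ((b * Z ω : ℝ) * Complex.I) ∂P = myCF P X a * myCF P Z b := by
  have hmap : P.map (fun ω => (X ω, Z ω)) = (P.map X).prod (P.map Z) :=
    (indepFun_iff_map_prod_eq_prod_map_map hX.aemeasurable hZ.aemeasurable).1 h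
  have hpm : Measurable fun ω => (X ω, Z ω) := hX.prodMk hZ
  have hsm : AEStronglyMeasurable
      (fun p : ℝ × ℝ => Complex.exp ((a * p.1 : ℝ) * Complex.I) *
        Complex.exp ((b * p.2 : ℝ) * Complex.I)) (P.map (fun ω => (X ω, Z ω))) := by
    exact (((expI_meas a).comp measurable_fst).mul
      ((expI_meas b).comp measurable_snd)).aestronglyMeasurable
  calc ∫ ω, Complex.exp ((a * X ω : ℝ) * Complex.I) *
        Complex.exp ((b * Z ω : ℝ) * Complex.I) ∂P
      = ∫ p : ℝ × ℝ, Complex.exp ((a * p.1 : ℝ) * Complex.I) *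
          Complex.exp ((b * p.2 : ℝ) * Complex.I) ∂(P.map (fun ω => (X ω, Z ω))) :=
        (integral_map hpm.aemeasurable hsm).symm
    _ = ∫ p : ℝ × ℝ, Complex.exp ((a * p.1 : ℝ) * Complex.I) *
          Complex.exp ((b * p.2 : ℝ) * Complex.I) ∂((P.map X).prod (P.map Z)) := by rw [hmap]
    _ = (∫ x, Complex.exp ((a * x : ℝ) * Complex.I) ∂(P.map X)) *
          ∫ y, Complex.exp ((b * y : ℝ) * Complex.I) ∂(P.map Z) :=
        integral_prod_mul (f := fun x => Complex.exp ((a * x : ℝ) * Complex.I)) (g := fun y => Complex.exp ((b * y : ℝ) * Complex.I))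
    _ = myCF P X a * myCF P Z b := by
        rw [myCF, myCF, integral_map hX.aemeasurable ((expI_meas a).aestronglyMeasurable),
          integral_map hZ.aemeasurable ((expI_meas b).aestronglyMeasurable)]


variable {Ω : Type*} [MeasurableSpace Ω] (P : Measure Ω) [IsProbabilityMeasure P]

lemma myCF_add_of_indep {X Z : Ω → ℝ} (h : IndepFun X Z P) (hX : Measurable X)
    (hZ : Measurable Z) (t : ℝ) :
    myCF P (fun ω => X ω + Z ω) t = myCF P X t * myCF P Z t := by
  rw [← myCF_indep_mul P h hX hZ t t, myCF]
  congr 1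
  funext ω
  rw [← Complex.exp_add]
  congr 1
  push_cast
  ring

lemma myCF_neg_fun (X : Ω → ℝ) (t : ℝ) :
    myCF P (fun ω => -X ω) t = starRingEnd ℂ (myCF P X t) := by
  rw [← myCF_neg P X t, myCF, myCF]
  congr 1
  funext ω
  norm_num

lemma myCF_norm_double {A C : Ω → ℝ} (hA : Measurable A) (hC : Measurable C)
    (hAC : IndepFun A C P)
    (hTV : IndepFun (fun ω => A ω + C ω) (fun ω => A ω - C ω) P) (s : ℝ) :
    ‖myCF P (fun ω => A ω + C ω) (2*s)‖ = ‖myCF P (fun ω => A ω + C ω) s‖^4 := by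
  set T : Ω → ℝ := fun ω => A ω + C ω with hTdef
  set V : Ω → ℝ := fun ω => A ω - C ω with hVdef
  have hT : Measurable T := hA.add hC
  have hV : Measurable V := hA.sub hC
  have hφ : ∀ t, myCF P T t = myCF P A t * myCF P C t := fun t =>
    myCF_add_of_indep P hAC hA hC t
  -- cf of V
  have hVeq : ∀ t, myCF P V t = myCF P A t * starRingEnd ℂ (myCF P C t) := by
    intro t
    have h1 : IndepFun A (fun ω => -C ω) P := hAC.comp measurable_id measurable_neg
    have h2 : myCF P V t = myCF P (fun ω => A ω + (-C ω)) t := by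
      congr 1
    rw [h2, myCF_add_of_indep P h1 hA hC.neg t, myCF_neg_fun]
  -- F(2s) = φ s * cf V s
  have hF2 : myCF P A (2*s) = myCF P T s * myCF P V s := by
    have h3 : myCF P A (2*s) = myCF P (fun ω => T ω + V ω) s := by
      rw [myCF, myCF]
      congr 1
      funext ω
      congr 2
      simp only [hTdef, hVdef]
      push_cast
      ring
    rw [h3, myCF_add_of_indep P hTV hT hV s]
  have hG2 : myCF P C (2*s) = myCF P T s * starRingEnd ℂ (myCF P V s) := by
    have h4 : IndepFun T (fun ω => -V ω) P := hTV.comp measurable_id measurable_neg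
    have h3 : myCF P C (2*s) = myCF P (fun ω => T ω + (-V ω)) s := by
      rw [myCF, myCF]
      congr 1
      funext ω
      congr 2
      simp only [hTdef, hVdef]
      push_cast
      ring
    rw [h3, myCF_add_of_indep P h4 hT hV.neg s, myCF_neg_fun]
  have hmain : myCF P T (2*s) =
      myCF P T s * myCF P T s * (myCF P V s * starRingEnd ℂ (myCF P V s)) := by
    rw [hφ (2*s), hF2, hG2]
    ring
  have hnormV : ‖myCF P V s‖ = ‖myCF P T s‖ := by
    rw [hVeq s, hφ s, norm_mul, norm_mul, RCLike.norm_conj]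
  rw [hmain]
  rw [Complex.mul_conj]
  simp only [norm_mul, Complex.norm_real, Complex.normSq_eq_norm_sq]
  rw [hnormV]
  rw [norm_pow]
  norm_num [abs_of_nonneg (norm_nonneg _)]
  ring

lemma myCF_tendsto_zero {X : Ω → ℝ} (hX : Measurable X) :
    Tendsto (myCF P X) (𝓝 0) (𝓝 1) := by
  have h1 : (1 : ℂ) = ∫ _ : Ω, (1:ℂ) ∂P := by simp
  rw [h1]
  refine tendsto_integral_filter_of_dominated_convergence (fun _ => (1:ℝ)) ?_ ?_ ?_ ?_
  · filter_upwards with t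
    have : Measurable fun ω => Complex.exp ((t * X ω : ℝ) * Complex.I) := by fun_prop
    exact this.aestronglyMeasurable
  · filter_upwards with t
    filter_upwards with ω
    rw [Complex.norm_exp_ofReal_mul_I]
  · exact integrable_const 1
  · filter_upwards with ω
    have hc : Continuous fun t : ℝ => Complex.exp ((t * X ω : ℝ) * Complex.I) := by fun_prop
    have := hc.tendsto 0
    simpa using this


variable {Ω : Type*} [MeasurableSpace Ω] (P : Measure Ω) [IsProbabilityMeasure P]

/-- 1 - cos x ≥ (43/96) x² for |x| ≤ 1 -/
lemma one_sub_cos_ge {x : ℝ} (hx : |x| ≤ 1) : (43/96) * x^2 ≤ 1 - Real.cos x := by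
  have h := Real.cos_bound hx
  have h2 : Real.cos x ≤ 1 - x^2/2 + |x|^4 * (5/96) := by
    have := abs_le.1 h
    linarith [this.2]
  have h3 : |x|^4 ≤ x^2 := by
    have h4 : |x|^4 = (|x|^2)^2 := by ring
    have h5 : |x|^2 = x^2 := sq_abs x
    have h6 : (x^2)^2 ≤ x^2 * 1 := by
      have : x^2 ≤ 1 := by
        rw [← h5]; nlinarith [abs_nonneg x]
      nlinarith [sq_nonneg x]
    rw [h4, h5]; linarith
  nlinarith

/-- The main analytic lemma: if `‖cf T (2s)‖ = ‖cf T s‖⁴` for all `s`, then `T` is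
square integrable. -/
lemma sq_integrable_of_double {T : Ω → ℝ} (hT : Measurable T)
    (hkey : ∀ s : ℝ, ‖myCF P T (2*s)‖ = ‖myCF P T s‖^4) :
    Integrable (fun ω => T ω^2) P := by
  classical
  set q : ℝ → ℝ := fun s => ‖myCF P T s‖^2 with hqdef
  have hq0 : ∀ s, 0 ≤ q s := fun s => sq_nonneg _
  have hq4 : ∀ s, q (2*s) = q s ^ 4 := by
    intro s
    simp only [hqdef]
    rw [hkey s]
    ring
  -- find s₀ with q s₀ > 1/2
  have hcont : Tendsto q (𝓝 0) (𝓝 1) := by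
    have h1 : Tendsto (fun s => ‖myCF P T s‖) (𝓝 0) (𝓝 1) := by
      have := (myCF_tendsto_zero P hT).norm
      simpa using this
    have := h1.pow 2
    simpa using this
  obtain ⟨s₀, hs₀pos, hs₀⟩ : ∃ s₀ : ℝ, 0 < s₀ ∧ 1/2 < q s₀ := by
    have hev : ∀ᶠ s in 𝓝 (0:ℝ), 1/2 < q s := by
      refine hcont.eventually (eventually_gt_nhds ?_)
      norm_num
    rw [Metric.eventually_nhds_iff] at hev
    obtain ⟨ε, hε, h⟩ := hev
    exact ⟨ε/2, by linarith, h (by rw [Real.dist_eq, sub_zero, abs_of_pos (by linarith)]; linarith)⟩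
  set L : ℝ := Real.log 2 with hLdef
  have hLpos : 0 < L := Real.log_pos (by norm_num)
  -- iterated relation
  have hiter : ∀ n : ℕ, q (s₀ / 2^n) ^ (4^n : ℕ) = q s₀ := by
    intro n
    induction n with
    | zero => simp
    | succ n ih =>
      have h1 : s₀ / 2^n = 2 * (s₀ / 2^(n+1)) := by
        rw [pow_succ]; ring
      rw [← ih, h1, hq4]
      rw [← pow_mul (q _) 4 (4^n), pow_succ (4:ℕ) n, mul_comm (4^n) 4]
  -- lower bound for q at small points
  have hlow : ∀ n : ℕ, 1 - L / 4^n ≤ q (s₀ / 2^n) := by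
    intro n
    by_contra hcon
    push_neg at hcon
    have h4pos : (0:ℝ) < 4^n := by positivity
    have hle : q (s₀ / 2^n) ≤ Real.exp (-(L/4^n)) := by
      have := Real.add_one_le_exp (-(L/4^n))
      linarith
    have hpow : q (s₀ / 2^n) ^ (4^n : ℕ) ≤ Real.exp (-(L/4^n)) ^ (4^n : ℕ) :=
      pow_le_pow_left₀ (hq0 _) hle _
    have hexp : Real.exp (-(L/4^n)) ^ (4^n : ℕ) = Real.exp (-L) := by
      rw [← Real.exp_nat_mul]
      congr 1
      push_cast
      field_simp
    have hfin : q s₀ ≤ Real.exp (-L) := by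
      rw [← hiter n]
      rw [hexp] at hpow
      exact hpow
    have : Real.exp (-L) = 1/2 := by
      rw [Real.exp_neg, Real.exp_log (by norm_num : (0:ℝ) < 2)]
      norm_num
    rw [this] at hfin
    linarith
  -- pass to product space
  set μ : Measure (Ω × Ω) := P.prod P with hμdef
  haveI : IsProbabilityMeasure μ := by rw [hμdef]; infer_instance
  set Z : Ω × Ω → ℝ := fun p => T p.1 - T p.2 with hZdef
  have hZmeas : Measurable Z := (hT.comp measurable_fst).sub (hT.comp measurable_snd)
  -- cos formula
  have hqcos : ∀ t : ℝ, ∫ p, Real.cos (t * Z p) ∂μ = q t := by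
    intro t
    have hprod : ∫ p, Complex.exp ((t * Z p : ℝ) * Complex.I) ∂μ
        = myCF P T t * starRingEnd ℂ (myCF P T t) := by
      have h1 : ∀ p : Ω × Ω, Complex.exp ((t * Z p : ℝ) * Complex.I)
          = Complex.exp ((t * T p.1 : ℝ) * Complex.I) *
            Complex.exp (((-t) * T p.2 : ℝ) * Complex.I) := by
        intro p
        rw [← Complex.exp_add]
        congr 1
        push_cast
        simp only [hZdef]
        push_cast
        ring
      calc ∫ p, Complex.exp ((t * Z p : ℝ) * Complex.I) ∂μ
          = ∫ p : Ω × Ω, Complex.exp ((t * T p.1 : ℝ) * Complex.I) *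
              Complex.exp (((-t) * T p.2 : ℝ) * Complex.I) ∂μ := by
            exact integral_congr_ae (ae_of_all _ h1)
        _ = (∫ ω, Complex.exp ((t * T ω : ℝ) * Complex.I) ∂P) *
              ∫ ω, Complex.exp (((-t) * T ω : ℝ) * Complex.I) ∂P :=
            integral_prod_mul (f := fun x => Complex.exp ((t * T x : ℝ) * Complex.I))
              (g := fun y => Complex.exp (((-t) * T y : ℝ) * Complex.I))
        _ = myCF P T t * myCF P T (-t) := rfl
        _ = myCF P T t * starRingEnd ℂ (myCF P T t) := by rw [myCF_neg]
    have hre : ∫ p, Real.cos (t * Z p) ∂μ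
        = (∫ p, Complex.exp ((t * Z p : ℝ) * Complex.I) ∂μ).re := by
      have h2 := integral_re (μ := μ)
        (f := fun p => Complex.exp ((t * Z p : ℝ) * Complex.I)) (integrable_expI μ hZmeas t)
      simp only [RCLike.re_to_complex] at h2
      rw [← h2]
      refine integral_congr_ae (ae_of_all _ fun p => ?_)
      simp only []
      rw [← Complex.exp_ofReal_mul_I_re (t * Z p)]
    rw [hre, hprod, Complex.mul_conj]
    simp [hqdef, Complex.normSq_eq_norm_sq, ← Complex.ofReal_pow]
  -- truncated second moment bound
  set κ : ℝ := 43/96 with hκdef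
  have hκpos : (0:ℝ) < κ := by norm_num
  set B : ℝ≥0∞ := ENNReal.ofReal (L / (κ * s₀^2)) with hBdef
  set S : ℕ → Set (Ω × Ω) := fun n => {p : Ω × Ω | |Z p| ≤ 2^n / s₀} with hSdef
  have hSmeas : ∀ n, MeasurableSet (S n) := fun n =>
    measurableSet_le hZmeas.abs measurable_const
  have hbound : ∀ n : ℕ, ∫⁻ p in S n, ENNReal.ofReal (Z p^2) ∂μ ≤ B := by
    intro n
    set t : ℝ := s₀ / 2^n with htdef
    have h2n : (0:ℝ) < 2^n := by positivity
    have htpos : 0 < t := by positivity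
    have h4n : ((4:ℝ))^n = ((2:ℝ)^n)^2 := by
      rw [← pow_mul, mul_comm, pow_mul]; norm_num
    have ht2 : t^2 = s₀^2 / 4^n := by
      rw [htdef, div_pow, h4n]
    have hq1 : 1 - q t ≤ L / 4^n := by have := hlow n; rw [htdef]; linarith [hlow n]
    have hcosmeas : Measurable fun p => Real.cos (t * Z p) :=
      Real.measurable_cos.comp (measurable_const.mul hZmeas)
    have hcosint : Integrable (fun p => Real.cos (t * Z p)) μ := by
      refine (integrable_const (1:ℝ)).mono' hcosmeas.aestronglyMeasurable ?_
      exact ae_of_all _ fun p => by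
        rw [Real.norm_eq_abs]; exact Real.abs_cos_le_one _
    have hintcos : Integrable (fun p => 1 - Real.cos (t * Z p)) μ :=
      (integrable_const (1:ℝ)).sub hcosint
    have hint1 : ∫ p, (1 - Real.cos (t * Z p)) ∂μ = 1 - q t := by
      rw [integral_sub (integrable_const 1) hcosint, integral_const, hqcos t]
      simp
    have hofReal : ∫⁻ p, ENNReal.ofReal (1 - Real.cos (t * Z p)) ∂μ
        = ENNReal.ofReal (1 - q t) := by
      rw [← hint1]
      exact (ofReal_integral_eq_lintegral_ofReal hintcos
        (ae_of_all _ fun p => by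
          simp only [Pi.zero_apply]
          linarith [Real.cos_le_one (t * Z p)])).symm
    have hstep : ∫⁻ p in S n, ENNReal.ofReal (κ * t^2 * Z p^2) ∂μ
        ≤ ENNReal.ofReal (1 - q t) := by
      rw [← hofReal]
      refine le_trans (setLIntegral_mono ?_ ?_) (setLIntegral_le_lintegral _ _)
      · exact ENNReal.measurable_ofReal.comp
          ((measurable_const.sub hcosmeas))
      · intro p hp
        refine ENNReal.ofReal_le_ofReal ?_
        have habs : |t * Z p| ≤ 1 := by
          rw [abs_mul, abs_of_pos htpos]
          have hZp : |Z p| ≤ 2^n / s₀ := hp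
          calc t * |Z p| ≤ t * (2^n / s₀) := by
                exact mul_le_mul_of_nonneg_left hZp htpos.le
          _ = 1 := by rw [htdef]; field_simp
        have := one_sub_cos_ge habs
        calc κ * t^2 * Z p^2 = κ * (t * Z p)^2 := by ring
        _ ≤ 1 - Real.cos (t * Z p) := this
    have hconst : ∀ p : Ω × Ω, ENNReal.ofReal (κ * t^2 * Z p^2)
        = ENNReal.ofReal (κ * t^2) * ENNReal.ofReal (Z p^2) := fun p =>
      ENNReal.ofReal_mul (by positivity)
    have hstep2 : ENNReal.ofReal (κ * t^2) * ∫⁻ p in S n, ENNReal.ofReal (Z p^2) ∂μ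
        ≤ ENNReal.ofReal (1 - q t) := by
      rw [← lintegral_const_mul' _ _ ENNReal.ofReal_ne_top]
      refine le_trans (le_of_eq ?_) hstep
      refine lintegral_congr fun p => ?_
      rw [hconst p]
    have hcpos : (0:ℝ) < κ * t^2 := by positivity
    have hcne0 : ENNReal.ofReal (κ * t^2) ≠ 0 := by
      simp [ENNReal.ofReal_eq_zero, not_le, hcpos]
    calc ∫⁻ p in S n, ENNReal.ofReal (Z p^2) ∂μ
        ≤ ENNReal.ofReal (1 - q t) / ENNReal.ofReal (κ * t^2) := by
          rw [ENNReal.le_div_iff_mul_le (Or.inl hcne0) (Or.inl ENNReal.ofReal_ne_top)]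
          rw [mul_comm]
          exact hstep2
      _ ≤ ENNReal.ofReal (L / 4^n) / ENNReal.ofReal (κ * t^2) := by
          gcongr

      _ = ENNReal.ofReal ((L / 4^n) / (κ * t^2)) := (ENNReal.ofReal_div_of_pos hcpos).symm
      _ = B := by
          have h4 : (0:ℝ) < 4^n := by positivity
          have heq : (L / 4^n) / (κ * t^2) = L / (κ * s₀^2) := by
            rw [ht2]
            field_simp
          rw [heq, hBdef]
  -- monotone convergence: full second moment bound on the product space
  have hZ2 : ∫⁻ p, ENNReal.ofReal (Z p^2) ∂μ ≤ B := by
    set f : ℕ → Ω × Ω → ℝ≥0∞ :=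
      fun n => (S n).indicator (fun p => ENNReal.ofReal (Z p^2)) with hfdef
    have hfmeas : ∀ n, Measurable (f n) := fun n =>
      (ENNReal.measurable_ofReal.comp (hZmeas.pow_const 2)).indicator (hSmeas n)
    have hmono : Monotone f := by
      intro m n hmn p
      by_cases hp : p ∈ S m
      · have hp2 : p ∈ S n := by
          have h1 : (2:ℝ)^m / s₀ ≤ 2^n / s₀ := by
            gcongr
            · norm_num
          exact le_trans hp h1
        rw [hfdef]
        simp only [Set.indicator_of_mem hp, Set.indicator_of_mem hp2]
        exact le_rfl
      · rw [hfdef]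
        simp only [Set.indicator_of_notMem hp]
        exact zero_le
    have hsup : ∀ p, (⨆ n, f n p) = ENNReal.ofReal (Z p^2) := by
      intro p
      obtain ⟨n, hn⟩ := pow_unbounded_of_one_lt (|Z p| * s₀) (by norm_num : (1:ℝ) < 2)
      have hmem : p ∈ S n := by
        show |Z p| ≤ 2^n / s₀
        rw [le_div_iff₀ hs₀pos]
        exact hn.le
      refine le_antisymm (iSup_le fun m => ?_) ?_
      · exact Set.indicator_le_self _ _ p
      · rw [← Set.indicator_of_mem hmem (fun p => ENNReal.ofReal (Z p^2))]
        exact le_iSup (fun m => f m p) n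
    calc ∫⁻ p, ENNReal.ofReal (Z p^2) ∂μ = ∫⁻ p, ⨆ n, f n p ∂μ :=
          lintegral_congr fun p => (hsup p).symm
      _ = ⨆ n, ∫⁻ p, f n p ∂μ := lintegral_iSup hfmeas hmono
      _ ≤ B := by
          refine iSup_le fun n => ?_
          rw [hfdef]
          rw [lintegral_indicator (hSmeas n)]
          exact hbound n
  have hZint : Integrable (fun p => Z p^2) μ := by
    refine ⟨(hZmeas.pow_const 2).aestronglyMeasurable, ?_⟩
    rw [hasFiniteIntegral_iff_ofReal (ae_of_all _ fun p => sq_nonneg _)]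
    exact lt_of_le_of_lt hZ2 ENNReal.ofReal_lt_top
  have hae : ∀ᵐ ω₀ ∂P, Integrable (fun ω => (T ω - T ω₀)^2) P := by
    have h := hZint.prod_left_ae
    exact h
  haveI : (MeasureTheory.ae P).NeBot := ae_neBot.2 (IsProbabilityMeasure.ne_zero (μ := P))
  obtain ⟨ω₀, hω₀⟩ := hae.exists
  set c : ℝ := T ω₀ with hcdef
  refine Integrable.mono' (g := fun ω => 2*(T ω - c)^2 + 2*c^2)
    ((hω₀.const_mul 2).add (integrable_const _)) (hT.pow_const 2).aestronglyMeasurable ?_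
  refine ae_of_all _ fun ω => ?_
  rw [Real.norm_eq_abs, abs_of_nonneg (sq_nonneg _)]
  show T ω ^ 2 ≤ 2*(T ω - c)^2 + 2*c^2
  nlinarith [sq_nonneg (T ω - 2*c)]


lemma key_sq_integrable {A C : Ω → ℝ} (hA : Measurable A) (hC : Measurable C)
    (hAC : IndepFun A C P)
    (hTV : IndepFun (fun ω => A ω + C ω) (fun ω => A ω - C ω) P) :
    Integrable (fun ω => (A ω + C ω)^2) P :=
  sq_integrable_of_double P (hA.add hC) (fun s => myCF_norm_double P hA hC hAC hTV s)



variable {Ω : Type*} [MeasurableSpace Ω] (P : Measure Ω) [IsProbabilityMeasure P]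

lemma measurable_processSigma {I : Type*} (X : I → Ω → ℝ) (i : I) :
    Measurable[processSigma X] (X i) := by
  intro s hs
  exact (le_iSup (fun i => MeasurableSpace.comap (X i) inferInstance) i) _ ⟨s, hs, rfl⟩

lemma indepFun_of_indep {m₁ m₂ : MeasurableSpace Ω} {mΩ : MeasurableSpace Ω}
    {P : Measure Ω} (h : Indep m₁ m₂ P)
    {f g : Ω → ℝ} (hf : Measurable[m₁] f) (hg : Measurable[m₂] g) : IndepFun f g P := by
  rw [IndepFun_iff_Indep]
  exact indep_of_indep_of_le_right (indep_of_indep_of_le_left h (measurable_iff_comap_le.1 hf))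
    (measurable_iff_comap_le.1 hg)

variable (Y : ℝ → Ω → ℝ) (hY : ConditionsB P Y)

section plumbing
include hY

lemma indep_AC (a : ℝ) (ha : 0 < a) :
    IndepFun (fun ω => Y (2*a) ω - Y a ω) (fun ω => Y (3*a) ω - Y (2*a) ω) P := by
  have h := hY.indepIncrements (2*a) (by linarith)
  refine (indepFun_of_indep h ?_ ?_).symm
  · exact measurable_processSigma
      (fun s : {s : ℝ // 2*a ≤ s} => fun ω => Y s.1 ω - Y (2*a) ω) ⟨3*a, by linarith⟩
  · exact Measurable.sub
      (measurable_processSigma (fun s : {s : ℝ // 0 < s ∧ s ≤ 2*a} => Y s.1)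
        ⟨2*a, ⟨by linarith, le_rfl⟩⟩)
      (measurable_processSigma (fun s : {s : ℝ // 0 < s ∧ s ≤ 2*a} => Y s.1)
        ⟨a, ⟨ha, by linarith⟩⟩)

lemma indep_TV (a : ℝ) (ha : 0 < a) :
    IndepFun (fun ω => (Y (2*a) ω - Y a ω) + (Y (3*a) ω - Y (2*a) ω))
      (fun ω => (Y (2*a) ω - Y a ω) - (Y (3*a) ω - Y (2*a) ω)) P := by
  have h := hY.harness a (3*a) ha (by linarith)
  refine (indepFun_of_indep h ?_ ?_).symm
  · -- V is twice the harness residual at 2a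
    have hW : Measurable[processSigma fun u : {u : ℝ // a < u ∧ u < 3*a} => fun ω =>
          Y u.1 ω - ((u.1 - a) / (3*a - a) * Y (3*a) ω + (3*a - u.1) / (3*a - a) * Y a ω)]
        (fun ω => Y (2*a) ω - ((2*a - a) / (3*a - a) * Y (3*a) ω
          + (3*a - 2*a) / (3*a - a) * Y a ω)) :=
      measurable_processSigma _ (i := (⟨2*a, ⟨by linarith, by linarith⟩⟩ : {u : ℝ // a < u ∧ u < 3*a}))
    have heq : (fun ω => (Y (2*a) ω - Y a ω) - (Y (3*a) ω - Y (2*a) ω))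
        = fun ω => 2 * (Y (2*a) ω - ((2*a - a) / (3*a - a) * Y (3*a) ω
          + (3*a - 2*a) / (3*a - a) * Y a ω)) := by
      funext ω
      have h3 : (3*a - a) ≠ 0 := by linarith
      field_simp
      ring
    rw [heq]
    exact hW.const_mul 2
  · have heq : (fun ω => (Y (2*a) ω - Y a ω) + (Y (3*a) ω - Y (2*a) ω))
        = fun ω => Y (3*a) ω - Y a ω := by
      funext ω; ring
    rw [heq]
    refine Measurable.sub ?_ ?_
    · exact (measurable_processSigma (fun v : {v : ℝ // 3*a ≤ v} => Y v.1)
        ⟨3*a, le_rfl⟩).mono le_sup_right le_rfl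
    · exact (measurable_processSigma (fun v : {v : ℝ // 0 < v ∧ v ≤ a} => Y v.1)
        ⟨a, ⟨ha, le_rfl⟩⟩).mono le_sup_left le_rfl

lemma key_L2 (a : ℝ) (ha : 0 < a) :
    Integrable (fun ω => (Y (3*a) ω - Y a ω)^2) P := by
  have h := key_sq_integrable P (A := fun ω => Y (2*a) ω - Y a ω)
    (C := fun ω => Y (3*a) ω - Y (2*a) ω)
    ((hY.meas _ (by linarith)).sub (hY.meas _ ha))
    ((hY.meas _ (by linarith)).sub (hY.meas _ (by linarith)))
    (indep_AC P Y hY a ha) (indep_TV P Y hY a ha)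
  have heq : (fun ω => ((Y (2*a) ω - Y a ω) + (Y (3*a) ω - Y (2*a) ω))^2)
      = fun ω => (Y (3*a) ω - Y a ω)^2 := by
    funext ω; ring
  rwa [heq] at h

lemma law_pair (c u v : ℝ) (hc : 0 < c) (hu : 0 < u) (hv : 0 < v) :
    Measure.map (fun ω => (Y (c*u) ω, Y (c*v) ω)) P
      = Measure.map (fun ω => (Real.sqrt c * Y u ω, Real.sqrt c * Y v ω)) P := by
  have h := hY.scaling c hc
  have hmeas1 : Measurable (fun ω (i : {u : ℝ // 0 < u}) => Y (c * i.1) ω) :=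
    measurable_pi_lambda _ fun i => hY.meas _ (mul_pos hc i.2)
  have hmeas2 : Measurable (fun ω (i : {u : ℝ // 0 < u}) => Real.sqrt c * Y i.1 ω) :=
    measurable_pi_lambda _ fun i => (hY.meas _ i.2).const_mul _
  have hp : Measurable (fun f : {u : ℝ // 0 < u} → ℝ => (f ⟨u, hu⟩, f ⟨v, hv⟩)) :=
    (measurable_pi_apply _).prodMk (measurable_pi_apply _)
  have h1 := congrArg (Measure.map (fun f : {u : ℝ // 0 < u} → ℝ => (f ⟨u, hu⟩, f ⟨v, hv⟩))) h
  rw [processLaw, processLaw, Measure.map_map hp hmeas1, Measure.map_map hp hmeas2] at h1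
  exact h1

lemma integral_pair_transfer (c u v : ℝ) (hc : 0 < c) (hu : 0 < u) (hv : 0 < v)
    (g : ℝ × ℝ → ℝ) (hg : Measurable g) :
    ∫ ω, g (Y (c*u) ω, Y (c*v) ω) ∂P
      = ∫ ω, g (Real.sqrt c * Y u ω, Real.sqrt c * Y v ω) ∂P := by
  have hm1 : Measurable fun ω => (Y (c*u) ω, Y (c*v) ω) :=
    (hY.meas _ (by positivity)).prodMk (hY.meas _ (by positivity))
  have hm2 : Measurable fun ω => (Real.sqrt c * Y u ω, Real.sqrt c * Y v ω) :=
    ((hY.meas _ hu).const_mul _).prodMk ((hY.meas _ hv).const_mul _)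
  rw [← integral_map hm1.aemeasurable hg.stronglyMeasurable.aestronglyMeasurable,
    law_pair P Y hY c u v hc hu hv,
    integral_map hm2.aemeasurable hg.stronglyMeasurable.aestronglyMeasurable]

lemma integrable_pair_transfer (c u v : ℝ) (hc : 0 < c) (hu : 0 < u) (hv : 0 < v)
    (g : ℝ × ℝ → ℝ) (hg : Measurable g)
    (h : Integrable (fun ω => g (Real.sqrt c * Y u ω, Real.sqrt c * Y v ω)) P) :
    Integrable (fun ω => g (Y (c*u) ω, Y (c*v) ω)) P := by
  have hm1 : Measurable fun ω => (Y (c*u) ω, Y (c*v) ω) :=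
    (hY.meas _ (by positivity)).prodMk (hY.meas _ (by positivity))
  have hm2 : Measurable fun ω => (Real.sqrt c * Y u ω, Real.sqrt c * Y v ω) :=
    ((hY.meas _ hu).const_mul _).prodMk ((hY.meas _ hv).const_mul _)
  have h2 : Integrable g (Measure.map (fun ω => (Real.sqrt c * Y u ω, Real.sqrt c * Y v ω)) P) :=
    (integrable_map_measure hg.stronglyMeasurable.aestronglyMeasurable hm2.aemeasurable).2 h
  rw [← law_pair P Y hY c u v hc hu hv] at h2
  exact (integrable_map_measure hg.stronglyMeasurable.aestronglyMeasurable
    hm1.aemeasurable).1 h2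

end plumbing

section plumbing2
include hY

lemma scale_rho (v : ℝ) (hv : 0 < v) :
    ∫ ω, (Y (v/3) ω - Y ((v/3)/3) ω)^2 ∂P
      = (1/3) * ∫ ω, (Y v ω - Y (v/3) ω)^2 ∂P := by
  have hg : Measurable (fun p : ℝ × ℝ => (p.1 - p.2)^2) := by fun_prop
  have h := integral_pair_transfer P Y hY (1/3) v (v/3) (by norm_num) hv (by positivity)
    (fun p : ℝ × ℝ => (p.1 - p.2)^2) hg
  simp only at h
  have e1 : (1/3 : ℝ) * v = v/3 := by ring
  have e2 : (1/3 : ℝ) * (v/3) = (v/3)/3 := by ring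
  rw [e1, e2] at h
  rw [h, ← integral_const_mul]
  congr 1
  funext ω
  have hs : Real.sqrt (1/3 : ℝ) ^ 2 = 1/3 := Real.sq_sqrt (by norm_num)
  calc (Real.sqrt (1/3:ℝ) * Y v ω - Real.sqrt (1/3:ℝ) * Y (v/3) ω)^2
      = Real.sqrt (1/3:ℝ)^2 * (Y v ω - Y (v/3) ω)^2 := by ring
    _ = 1/3 * (Y v ω - Y (v/3) ω)^2 := by rw [hs]

lemma Dsum : ∀ (n : ℕ) (v : ℝ), 0 < v →
    Integrable (fun ω => (Y v ω - Y (v/3^n) ω)^2) P ∧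
    ∫ ω, (Y v ω - Y (v/3^n) ω)^2 ∂P ≤ (3/2) * ∫ ω, (Y v ω - Y (v/3) ω)^2 ∂P := by
  intro n
  induction n with
  | zero =>
    intro v hv
    have heq : (fun ω => (Y v ω - Y (v/3^0) ω)^2) = fun _ => (0:ℝ) := by
      funext ω
      have e : v/3^(0:ℕ) = v := by norm_num
      rw [e]
      ring
    have hnn : (0:ℝ) ≤ ∫ ω, (Y v ω - Y (v/3) ω)^2 ∂P :=
      integral_nonneg fun ω => sq_nonneg _
    constructor
    · rw [heq]; exact integrable_const 0
    · rw [heq]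
      simp only [integral_const, smul_eq_mul, mul_zero]
      linarith
  | succ n ih =>
    intro v hv
    have hv3 : 0 < v/3 := by positivity
    have hv3n : 0 < (v/3)/3^n := by positivity
    set A : Ω → ℝ := fun ω => Y v ω - Y (v/3) ω with hAdef
    set B : Ω → ℝ := fun ω => Y (v/3) ω - Y ((v/3)/3^n) ω with hBdef
    have hfun : (fun ω => (Y v ω - Y (v/3^(n+1)) ω)^2) = fun ω => (A ω + B ω)^2 := by
      funext ω
      have e : v/3^(n+1) = (v/3)/3^n := by
        rw [pow_succ]
        ring
      rw [hAdef, hBdef, e]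
      ring
    have hAint2 : Integrable (fun ω => A ω^2) P := by
      have h := key_L2 P Y hY (v/3) hv3
      have e : 3*(v/3) = v := by ring
      rw [e] at h
      exact h
    obtain ⟨hBint2', hBbd'⟩ := ih (v/3) hv3
    have hBint2 : Integrable (fun ω => B ω^2) P := hBint2'
    have hBbd : ∫ ω, B ω^2 ∂P ≤ (3/2) * ∫ ω, (Y (v/3) ω - Y ((v/3)/3) ω)^2 ∂P := hBbd'
    have h3n : (1:ℝ) ≤ 3^n := one_le_pow₀ (by norm_num)
    have hAB : IndepFun A B P := by
      have h := hY.indepIncrements (v/3) hv3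
      refine indepFun_of_indep h ?_ ?_
      · have := measurable_processSigma
          (fun s : {s : ℝ // v/3 ≤ s} => fun ω => Y s.1 ω - Y (v/3) ω) ⟨v, by linarith⟩
        exact this
      · refine Measurable.sub
          (measurable_processSigma (fun s : {s : ℝ // 0 < s ∧ s ≤ v/3} => Y s.1)
            ⟨v/3, ⟨hv3, le_rfl⟩⟩)
          (measurable_processSigma (fun s : {s : ℝ // 0 < s ∧ s ≤ v/3} => Y s.1)
            ⟨(v/3)/3^n, ⟨hv3n, div_le_self hv3.le h3n⟩⟩)
    have hA1 : Integrable A P := ((hY.centred v hv).1).sub ((hY.centred _ hv3).1)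
    have hB1 : Integrable B P := ((hY.centred _ hv3).1).sub ((hY.centred _ hv3n).1)
    have hABint : Integrable (fun ω => A ω * B ω) P := hAB.integrable_mul hA1 hB1
    have hintA : ∫ ω, A ω ∂P = 0 := by
      rw [hAdef]
      rw [integral_sub ((hY.centred v hv).1) ((hY.centred _ hv3).1),
        (hY.centred v hv).2, (hY.centred _ hv3).2]
      ring
    have hintB : ∫ ω, B ω ∂P = 0 := by
      rw [hBdef]
      rw [integral_sub ((hY.centred _ hv3).1) ((hY.centred _ hv3n).1),
        (hY.centred _ hv3).2, (hY.centred _ hv3n).2]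
      ring
    have hintAB : ∫ ω, A ω * B ω ∂P = 0 := by
      have h2 : integral P (A * B) = integral P A * integral P B :=
        hAB.integral_mul_eq_mul_integral hA1.aestronglyMeasurable hB1.aestronglyMeasurable
      have h3 : ∫ ω, A ω * B ω ∂P = integral P (A * B) := rfl
      have h4 : integral P A = 0 := hintA
      have h5 : integral P B = 0 := hintB
      rw [h3, h2, h4, h5, mul_zero]
    have hexp : (fun ω => (A ω + B ω)^2)
        = fun ω => A ω^2 + (2*(A ω * B ω) + B ω^2) := by
      funext ω; ring
    have hint2 : Integrable (fun ω => (A ω + B ω)^2) P := by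
      rw [hexp]
      exact hAint2.add ((hABint.const_mul 2).add hBint2)
    have hval : ∫ ω, (A ω + B ω)^2 ∂P = ∫ ω, A ω^2 ∂P + ∫ ω, B ω^2 ∂P := by
      rw [hexp, integral_add hAint2 (show Integrable (fun ω => 2*(A ω*B ω)+B ω^2) P from
          (hABint.const_mul 2).add hBint2),
        integral_add (show Integrable (fun ω => 2*(A ω*B ω)) P from hABint.const_mul 2) hBint2,
        integral_const_mul, hintAB]
      ring
    have hscale := scale_rho P Y hY v hv
    constructor
    · rw [hfun]; exact hint2
    · rw [hfun, hval]
      rw [hscale] at hBbd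
      have hAeq : ∫ ω, A ω^2 ∂P = ∫ ω, (Y v ω - Y (v/3) ω)^2 ∂P := rfl
      rw [hAeq]
      linarith

lemma law_single (c u : ℝ) (hc : 0 < c) (hu : 0 < u) :
    Measure.map (Y (c*u)) P = Measure.map (fun ω => Real.sqrt c * Y u ω) P := by
  have h := law_pair P Y hY c u u hc hu hu
  have h1 := congrArg (Measure.map (fun p : ℝ × ℝ => p.1)) h
  rw [Measure.map_map measurable_fst
      ((hY.meas _ (mul_pos hc hu)).prodMk (hY.meas _ (mul_pos hc hu))),
    Measure.map_map measurable_fst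
      (((hY.meas _ hu).const_mul _).prodMk ((hY.meas _ hu).const_mul _))] at h1
  exact h1

lemma tail_small (u : ℝ) (hu : 0 < u) (ε : ℝ) (hε : 0 < ε) :
    Tendsto (fun n : ℕ => P {ω | ε ≤ |Y (u/3^n) ω|}) atTop (𝓝 0) := by
  have habs : Measurable fun x : ℝ => |x| := continuous_abs.measurable
  have hmain : ∀ n : ℕ, P {ω | ε ≤ |Y (u/3^n) ω|}
      = P {ω | ε / Real.sqrt ((1/3:ℝ)^n) ≤ |Y u ω|} := by
    intro n
    have hc : (0:ℝ) < (1/3:ℝ)^n := by positivity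
    have hsq : 0 < Real.sqrt ((1/3:ℝ)^n) := Real.sqrt_pos.2 hc
    have e : (1/3:ℝ)^n * u = u/3^n := by
      rw [div_pow, one_pow]
      ring
    have h := law_single P Y hY ((1/3:ℝ)^n) u hc hu
    rw [e] at h
    have hs : MeasurableSet {x : ℝ | ε ≤ |x|} := measurableSet_le measurable_const habs
    have h1 := congrArg (fun m : Measure ℝ => m {x : ℝ | ε ≤ |x|}) h
    rw [Measure.map_apply (hY.meas _ (by positivity)) hs,
      Measure.map_apply ((hY.meas _ hu).const_mul _) hs] at h1
    rw [show (Y (u/3^n) ⁻¹' {x | ε ≤ |x|}) = {ω | ε ≤ |Y (u/3^n) ω|} from rfl] at h1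
    rw [h1]
    congr 1
    ext ω
    simp only [mem_preimage, mem_setOf_eq]
    rw [abs_mul, abs_of_nonneg (Real.sqrt_nonneg _), div_le_iff₀ hsq, mul_comm]
  have hrw : (fun n : ℕ => P {ω | ε ≤ |Y (u/3^n) ω|})
      = fun n => P {ω | ε / Real.sqrt ((1/3:ℝ)^n) ≤ |Y u ω|} := funext hmain
  rw [hrw]
  have hnat : Tendsto (fun k : ℕ => P {ω | (k:ℝ) ≤ |Y u ω|}) atTop (𝓝 0) := by
    have hmeasA : ∀ k : ℕ, MeasurableSet {ω | (k:ℝ) ≤ |Y u ω|} := fun k =>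
      measurableSet_le measurable_const (hY.meas u hu).abs
    have hanti : Antitone fun k : ℕ => {ω | (k:ℝ) ≤ |Y u ω|} := by
      intro j k hjk ω hω
      exact le_trans ((Nat.cast_le (α := ℝ)).2 hjk) hω
    have hempty : ⋂ k : ℕ, {ω | (k:ℝ) ≤ |Y u ω|} = ∅ := by
      ext ω
      simp only [mem_iInter, mem_setOf_eq, mem_empty_iff_false, iff_false, not_forall, not_le]
      obtain ⟨k, hk⟩ := exists_nat_gt |Y u ω|
      exact ⟨k, hk⟩
    have h := tendsto_measure_iInter_atTop (μ := P) (fun k => (hmeasA k).nullMeasurableSet) hanti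
      ⟨0, measure_ne_top P _⟩
    rw [hempty] at h
    simpa [Function.comp_def] using h
  have hM : Tendsto (fun n : ℕ => ε / Real.sqrt ((1/3:ℝ)^n)) atTop atTop := by
    have h2 : Tendsto (fun n : ℕ => ((1/3:ℝ))^n) atTop (𝓝 0) :=
      tendsto_pow_atTop_nhds_zero_of_lt_one (by norm_num) (by norm_num)
    have h1 : Tendsto (fun n : ℕ => Real.sqrt ((1/3:ℝ)^n)) atTop (𝓝 0) := by
      have h5 := (Real.continuous_sqrt.tendsto 0).comp h2
      simpa only [Function.comp_def, Real.sqrt_zero] using h5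
    have h1' : Tendsto (fun n : ℕ => Real.sqrt ((1/3:ℝ)^n)) atTop (𝓝[>] 0) := by
      refine tendsto_nhdsWithin_of_tendsto_nhds_of_eventually_within _ h1 ?_
      filter_upwards with n
      exact Real.sqrt_pos.2 (by positivity)
    have h3 : Tendsto (fun n : ℕ => (Real.sqrt ((1/3:ℝ)^n))⁻¹) atTop atTop :=
      tendsto_inv_nhdsGT_zero.comp h1'
    have h4 := h3.const_mul_atTop hε
    refine h4.congr fun n => (div_eq_mul_inv ε _).symm
  refine ENNReal.tendsto_nhds_zero.2 fun δ hδ => ?_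
  obtain ⟨k, hk⟩ := (ENNReal.tendsto_nhds_zero.1 hnat δ hδ).exists
  have hev : ∀ᶠ n in atTop, (k:ℝ) ≤ ε / Real.sqrt ((1/3:ℝ)^n) := hM.eventually_ge_atTop _
  filter_upwards [hev] with n hn
  refine le_trans (measure_mono ?_) hk
  intro ω hω
  exact le_trans hn hω

end plumbing2


end CBaux
end

/-- **Lemma (square integrability).** If the centred process `(Y(u))_{u∈(0,∞)}` satisfies
Conditions (B), then `E[Y(u)²] < ∞` for every `u ∈ (0,∞)`. -/
theorem conditionsB_square_integrable {Ω : Type*} [MeasurableSpace Ω] (P : Measure Ω)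
    [IsProbabilityMeasure P] (Y : ℝ → Ω → ℝ) (hY : ConditionsB P Y) :
    ∀ u : ℝ, 0 < u → ∫⁻ ω, ENNReal.ofReal ((Y u ω) ^ 2) ∂P < ⊤ := by

  intro u hu
  set K : ℝ≥0∞ := ENNReal.ofReal ((3/2) * ∫ ω, (Y u ω - Y (u/3) ω)^2 ∂P) with hKdef
  have hK : ∀ n : ℕ, ∫⁻ ω, ENNReal.ofReal ((Y u ω - Y (u/3^n) ω)^2) ∂P ≤ K := by
    intro n
    obtain ⟨hint, hbd⟩ := CBaux.Dsum P Y hY n u hu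
    rw [← ofReal_integral_eq_lintegral_ofReal hint (ae_of_all _ fun ω => sq_nonneg _)]
    exact ENNReal.ofReal_le_ofReal hbd
  have hTIM : TendstoInMeasure P (fun n ω => Y u ω - Y (u/3^n) ω) atTop (Y u) := by
    rw [tendstoInMeasure_iff_dist]
    intro ε hε
    have h := CBaux.tail_small P Y hY u hu ε hε
    have hset : ∀ n : ℕ, {ω | ε ≤ dist (Y u ω - Y (u/3^n) ω) (Y u ω)}
        = {ω | ε ≤ |Y (u/3^n) ω|} := by
      intro n
      ext ω
      rw [mem_setOf_eq, mem_setOf_eq, Real.dist_eq,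
        show Y u ω - Y (u/3^n) ω - Y u ω = -(Y (u/3^n) ω) by ring, abs_neg]
    simpa only [hset] using h
  obtain ⟨ns, hns, hae⟩ := hTIM.exists_seq_tendsto_ae
  have h1 : ∫⁻ ω, ENNReal.ofReal ((Y u ω)^2) ∂P
      = ∫⁻ ω, liminf (fun i => ENNReal.ofReal ((Y u ω - Y (u/3^(ns i)) ω)^2)) atTop ∂P := by
    refine lintegral_congr_ae ?_
    filter_upwards [hae] with ω hω
    have h2 : Tendsto (fun i => ENNReal.ofReal ((Y u ω - Y (u/3^(ns i)) ω)^2)) atTop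
        (𝓝 (ENNReal.ofReal ((Y u ω)^2))) := by
      refine (ENNReal.continuous_ofReal.tendsto _).comp ?_
      exact ((continuous_pow 2).tendsto (Y u ω)).comp hω
    exact (h2.liminf_eq).symm
  have hmi : ∀ i : ℕ, Measurable fun ω => ENNReal.ofReal ((Y u ω - Y (u/3^(ns i)) ω)^2) := by
    intro i
    have hp : (0:ℝ) < u/3^(ns i) := by positivity
    exact ENNReal.measurable_ofReal.comp (((hY.meas u hu).sub (hY.meas _ hp)).pow_const 2)
  calc ∫⁻ ω, ENNReal.ofReal ((Y u ω)^2) ∂P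
      = ∫⁻ ω, liminf (fun i => ENNReal.ofReal ((Y u ω - Y (u/3^(ns i)) ω)^2)) atTop ∂P := h1
    _ ≤ liminf (fun i => ∫⁻ ω, ENNReal.ofReal ((Y u ω - Y (u/3^(ns i)) ω)^2) ∂P) atTop :=
        lintegral_liminf_le hmi
    _ ≤ K := by
        refine le_trans (Filter.liminf_le_liminf (Filter.Eventually.of_forall fun i => hK (ns i)))
          ?_
        simp [Filter.liminf_const]
    _ < ⊤ := ENNReal.ofReal_lt_top
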